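/- In the case k = 1, the limiting density of 1-gaps is D(1, 1) = 4·lim_{n→∞} t_n^{(1)} = 1 + 12·Σ_{n=2}^{∞} (n + 1)(−2)^{n−1}/(n + 3)! = 1 − 3e^{−2}. -/

import Mathlib

open Finset Filter Topology

private noncomputable def pk1c : ℕ → ℝ :=
  fun j => 3 * ((j : ℝ) + 1) * (-2 : ℝ) ^ (j - 1) / ((j + 3).factorial : ℝ)

private noncomputable def pk1F : ℕ → ℝ :=
  fun n => (n : ℝ) * ((n : ℝ) + 3) * (1 / 4 + ∑ j ∈ Finset.Icc 2 n, pk1c j)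

set_option maxHeartbeats 1000000 in
private lemma pk1_hasSum :
    HasSum (fun n : ℕ => ((n : ℝ) + 3) * (-2 : ℝ) ^ (n + 1) / ((n + 5).factorial : ℝ))
      (-Real.exp (-2) / 4) := by
  have hg : HasSum (fun n : ℕ => (-2 : ℝ) ^ n / (n.factorial : ℝ)) (Real.exp (-2)) := by
    have h := NormedSpace.expSeries_div_hasSum_exp (-2 : ℝ)
    rwa [show NormedSpace.exp (-2 : ℝ) = Real.exp (-2) from
      (congrFun Real.exp_eq_exp_ℝ (-2)).symm] at h
  have h4 : HasSum (fun n : ℕ => (-2 : ℝ) ^ (n + 4) / ((n + 4).factorial : ℝ))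
      (Real.exp (-2) - ∑ i ∈ Finset.range 4, (-2 : ℝ) ^ i / (i.factorial : ℝ)) :=
    (hasSum_nat_add_iff' 4).2 hg
  have h5 : HasSum (fun n : ℕ => (-2 : ℝ) ^ (n + 5) / ((n + 5).factorial : ℝ))
      (Real.exp (-2) - ∑ i ∈ Finset.range 5, (-2 : ℝ) ^ i / (i.factorial : ℝ)) :=
    (hasSum_nat_add_iff' 5).2 hg
  have key := ((h4.add h5).div_const (-8))
  have heq : (fun n : ℕ =>
      ((-2 : ℝ) ^ (n + 4) / ((n + 4).factorial : ℝ) + (-2 : ℝ) ^ (n + 5) / ((n + 5).factorial : ℝ))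
        / (-8)) =
      fun n : ℕ => ((n : ℝ) + 3) * (-2 : ℝ) ^ (n + 1) / ((n + 5).factorial : ℝ) := by
    funext n
    have hfac5 : ((n + 5).factorial : ℝ) = ((n : ℝ) + 5) * ((n + 4).factorial : ℝ) := by
      rw [show n + 5 = (n + 4) + 1 from rfl, Nat.factorial_succ]; push_cast; ring
    have hfacpos4 : ((n + 4).factorial : ℝ) ≠ 0 := by positivity
    have hpow : (-2 : ℝ) ^ (n + 4) = (-2 : ℝ) ^ (n + 1) * (-8) := by
      rw [show n + 4 = (n + 1) + 3 from rfl, pow_add]; norm_num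
    have hpow5 : (-2 : ℝ) ^ (n + 5) = (-2 : ℝ) ^ (n + 1) * 16 := by
      rw [show n + 5 = (n + 1) + 4 from rfl, pow_add]; norm_num
    rw [hfac5, hpow, hpow5]
    have hn5 : ((n : ℝ) + 5) ≠ 0 := by positivity
    field_simp
    ring
  rw [heq] at key
  have hval : (Real.exp (-2) - ∑ i ∈ Finset.range 4, (-2 : ℝ) ^ i / (i.factorial : ℝ) +
      (Real.exp (-2) - ∑ i ∈ Finset.range 5, (-2 : ℝ) ^ i / (i.factorial : ℝ))) / (-8)
      = -Real.exp (-2) / 4 := by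
    simp only [Finset.sum_range_succ, Finset.sum_range_zero, Nat.factorial]
    norm_num
    ring
  rwa [hval] at key

theorem parking_k1_density_one_gaps
    (a s t : ℕ → ℝ)
    (ha1 : a 1 = 1) (ha2 : a 2 = 0)
    (ha_rec : ∀ n : ℕ, 3 ≤ n →
      a n = 2 / ((n : ℝ) - 2) * ∑ i ∈ Finset.Icc 1 (n - 2), a i)
    (hs : ∀ n : ℕ, s n = ∑ i ∈ Finset.Icc 1 n, a i)
    (ht : ∀ n : ℕ, t n = s n / ((n : ℝ) * ((n : ℝ) + 3)))
    (L : ℝ) (hL : Filter.Tendsto t Filter.atTop (𝓝 L)) :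
    4 * L = 1 + 12 * ∑' n : ℕ,
        ((n : ℝ) + 3) * (-2 : ℝ) ^ (n + 1) / ((n + 5).factorial : ℝ) ∧
    4 * L = 1 - 3 * Real.exp (-2) := by
  -- s(n+1) = s n + a(n+1)
  have hs_succ : ∀ n : ℕ, 1 ≤ n → s (n + 1) = s n + a (n + 1) := by
    intro n hn
    rw [hs, hs, Finset.sum_Icc_succ_top (by omega)]
  -- closed form for s
  have hsF : ∀ m : ℕ, s (m + 1) = pk1F (m + 1) ∧ s (m + 2) = pk1F (m + 2) := by
    intro m
    induction m with
    | zero =>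
      constructor
      · rw [hs]
        simp [pk1F, pk1c, Finset.Icc_self, ha1]
        norm_num
      · rw [hs]
        rw [show Finset.Icc 1 2 = {1, 2} by decide]
        rw [Finset.sum_pair (by norm_num), ha1, ha2]
        show (1 : ℝ) + 0 = pk1F 2
        unfold pk1F
        rw [show Finset.Icc 2 2 = {2} from Finset.Icc_self 2, Finset.sum_singleton]
        unfold pk1c
        norm_num [Nat.factorial]
    | succ m ih =>
      refine ⟨ih.2, ?_⟩
      have ha3 : a (m + 3) = 2 / ((m : ℝ) + 1) * s (m + 1) := by
        rw [ha_rec (m + 3) (by omega), hs (m + 1)]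
        norm_num
        push_cast
        ring_nf
      have hstep : s (m + 3) = s (m + 2) + 2 / ((m : ℝ) + 1) * s (m + 1) := by
        rw [hs_succ (m + 2) (by omega), ha3]
      rw [hstep, ih.1, ih.2]
      -- algebraic identity for F
      unfold pk1F
      rw [show m + 3 = (m + 2) + 1 from rfl,
        Finset.sum_Icc_succ_top (by omega : 2 ≤ m + 2 + 1) pk1c,
        show m + 2 = (m + 1) + 1 from rfl,
        Finset.sum_Icc_succ_top (by omega : 2 ≤ m + 1 + 1) pk1c]
      set S : ℝ := ∑ j ∈ Finset.Icc 2 (m + 1), pk1c j with hS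
      have hc2 : pk1c (m + 2) = 3 * ((m : ℝ) + 3) * (-2 : ℝ) ^ (m + 1) / ((m + 5).factorial : ℝ) := by
        unfold pk1c
        rw [show m + 2 - 1 = m + 1 from by omega, show m + 2 + 3 = m + 5 from by omega]
        push_cast
        ring
      have hc3 : pk1c (m + 3) = 3 * ((m : ℝ) + 4) * (-2 : ℝ) ^ (m + 2) / ((m + 6).factorial : ℝ) := by
        unfold pk1c
        rw [show m + 3 - 1 = m + 2 from by omega, show m + 3 + 3 = m + 6 from by omega]
        push_cast
        ring
      rw [hc2, hc3]
      have hfac6 : ((m + 6).factorial : ℝ) = ((m : ℝ) + 6) * (((m : ℝ) + 5) * ((m + 4).factorial : ℝ)) := by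
        rw [show m + 6 = (m + 5) + 1 from rfl, Nat.factorial_succ,
          show m + 5 = (m + 4) + 1 from rfl, Nat.factorial_succ]
        push_cast; ring
      have hfac5 : ((m + 5).factorial : ℝ) = ((m : ℝ) + 5) * ((m + 4).factorial : ℝ) := by
        rw [show m + 5 = (m + 4) + 1 from rfl, Nat.factorial_succ]
        push_cast; ring
      have hpow : (-2 : ℝ) ^ (m + 2) = (-2 : ℝ) ^ (m + 1) * (-2) := pow_succ _ _
      rw [hfac6, hfac5, hpow]
      have h1 : ((m : ℝ) + 1) ≠ 0 := by positivity
      have h2 : ((m + 4).factorial : ℝ) ≠ 0 := by positivity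
      have h3 : ((m : ℝ) + 5) ≠ 0 := by positivity
      have h4 : ((m : ℝ) + 6) ≠ 0 := by positivity
      push_cast
      field_simp
      ring
  -- t closed form
  have htF : ∀ n : ℕ, 1 ≤ n → t n = 1 / 4 + ∑ j ∈ Finset.Icc 2 n, pk1c j := by
    intro n hn
    obtain ⟨m, rfl⟩ := Nat.exists_eq_add_of_le' hn
    rw [ht, (hsF m).1]
    unfold pk1F
    have h1 : ((m : ℝ) + 1) ≠ 0 := by positivity
    have h2 : ((m : ℝ) + 1 + 3) ≠ 0 := by positivity
    push_cast
    field_simp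
  -- limit identification
  have hsum := pk1_hasSum
  have htendS : Filter.Tendsto
      (fun n => 1 / 4 + ∑ j ∈ Finset.Icc 2 n, pk1c j) Filter.atTop
      (𝓝 (1 / 4 + 3 * (-Real.exp (-2) / 4))) := by
    have h3sum : HasSum (fun i : ℕ => pk1c (i + 2)) (3 * (-Real.exp (-2) / 4)) := by
      have : (fun i : ℕ => pk1c (i + 2)) =
          fun i : ℕ => 3 * (((i : ℝ) + 3) * (-2 : ℝ) ^ (i + 1) / ((i + 5).factorial : ℝ)) := by
        funext i
        unfold pk1c
        push_cast
        ring
      rw [this]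
      exact hsum.mul_left 3
    have hpartial := h3sum.tendsto_sum_nat
    have hre : ∀ n : ℕ, ∑ j ∈ Finset.Icc 2 n, pk1c j = ∑ i ∈ Finset.range (n + 1 - 2), pk1c (i + 2) := by
      intro n
      rw [← Finset.Ico_add_one_right_eq_Icc, Finset.sum_Ico_eq_sum_range]
      exact Finset.sum_congr rfl fun i _ => by rw [Nat.add_comm 2 i]
    have hcomp : Filter.Tendsto (fun n : ℕ => n + 1 - 2) Filter.atTop Filter.atTop :=
      Filter.tendsto_atTop_atTop.2 fun b => ⟨b + 2, fun n hn => by omega⟩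
    have := hpartial.comp hcomp
    refine Filter.Tendsto.const_add _ ?_
    simpa [hre, Function.comp_def] using this
  have hLval : L = 1 / 4 + 3 * (-Real.exp (-2) / 4) := by
    have : Filter.Tendsto t Filter.atTop (𝓝 (1 / 4 + 3 * (-Real.exp (-2) / 4))) := by
      refine htendS.congr' ?_
      filter_upwards [Filter.eventually_ge_atTop 1] with n hn
      exact (htF n hn).symm
    exact tendsto_nhds_unique hL this
  have hT : ∑' n : ℕ, ((n : ℝ) + 3) * (-2 : ℝ) ^ (n + 1) / ((n + 5).factorial : ℝ)
      = -Real.exp (-2) / 4 := hsum.tsum_eq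
  constructor
  · rw [hLval, hT]; ring
  · rw [hLval]; ring
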